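/- Let n ≥ 2 and fix i ≠ j with 1 ≤ i, j ≤ n. Let w be the permutation of {1,…,n} with w(i) = 1, w(j) = n, and whose values at the remaining positions, read in increasing order of position, are n−1, n−2, …, 2 in decreasing order. Then w is the largest permutation in the Bruhat order satisfying w(i) = 1 and w(j) = n; that is, every permutation v of {1,…,n} with v(i) = 1 and v(j) = n satisfies v ≤ w. -/

import Mathlib

open Matrix

noncomputable section

/-- The length of a permutation: its number of inversions. -/
def invLen {n : ℕ} (w : Equiv.Perm (Fin n)) : ℕ :=
  (Finset.univ.filter (fun p : Fin n × Fin n => p.1 < p.2 ∧ w p.2 < w p.1)).card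

def IsTransposition {n : ℕ} (t : Equiv.Perm (Fin n)) : Prop :=
  ∃ a b : Fin n, a ≠ b ∧ t = Equiv.swap a b

/-- `BruhatCovers w v` means `w` covers `v` in the Bruhat order:
`v = w·t` for some transposition `t` and `ℓ(v) = ℓ(w) − 1`. -/
def BruhatCovers {n : ℕ} (w v : Equiv.Perm (Fin n)) : Prop :=
  (∃ t, IsTransposition t ∧ v = w * t) ∧ invLen v + 1 = invLen w

/-- The Bruhat order: reflexive–transitive closure of the covering relation. -/
def BruhatLE {n : ℕ} (v w : Equiv.Perm (Fin n)) : Prop :=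
  Relation.ReflTransGen (fun x y => BruhatCovers y x) v w

def BruhatLT {n : ℕ} (v w : Equiv.Perm (Fin n)) : Prop :=
  BruhatLE v w ∧ v ≠ w

/-- The matrix unit `E_{kl}`. -/
def stdE (n : ℕ) (k l : Fin n) : Matrix (Fin n) (Fin n) ℂ := Matrix.single k l 1

/-- The permutation matrix of `σ`: entry `(k,l)` is `1` iff `k = σ(l)`. -/
def permMat {n : ℕ} (σ : Equiv.Perm (Fin n)) : Matrix (Fin n) (Fin n) ℂ :=
  Matrix.of fun k l => if k = σ l then 1 else 0

/-- The Hessenberg space of a (1-based) Hessenberg function `h`: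
matrices `M` with `M_{kl} = 0` whenever `k > h(l)`.  Row index `k : Fin n`
corresponds to the 1-based row `(k : ℕ) + 1`. -/
def HessSpace {n : ℕ} (h : Fin n → ℕ) : Set (Matrix (Fin n) (Fin n) ℂ) :=
  {M | ∀ k l : Fin n, h l < (k : ℕ) + 1 → M k l = 0}

/-- The span `H_{ij}` of the matrix units `E_{kl}` with `k ≤ i` and `l ≥ j`
(`i`, `j`, `k`, `l` all 1-based): matrices vanishing outside the
upper-right `i × (n−j+1)` rectangle. -/
def Hrect (n i j : ℕ) : Set (Matrix (Fin n) (Fin n) ℂ) :=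
  {M | ∀ k l : Fin n, ¬((k : ℕ) + 1 ≤ i ∧ j ≤ (l : ℕ) + 1) → M k l = 0}

section Aux

variable {n : ℕ}

private def swF (a b : Fin n) (p : Fin n × Fin n) : Fin n × Fin n :=
  if Equiv.swap a b p.1 < Equiv.swap a b p.2 then (Equiv.swap a b p.1, Equiv.swap a b p.2)
  else p

private lemma swF_invol (a b : Fin n) (p : Fin n × Fin n) (hp : p.1 < p.2) :
    swF a b (swF a b p) = p := by
  by_cases h : Equiv.swap a b p.1 < Equiv.swap a b p.2
  · simp [swF, h, Equiv.swap_apply_self, hp]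
  · simp [swF, h]

private lemma swF_mem₁ {x : Equiv.Perm (Fin n)} {a b : Fin n} (hab : a < b) (hx : x a < x b)
    (hmid : ∀ c : Fin n, a < c → c < b → ¬(x a < x c ∧ x c < x b))
    {p : Fin n × Fin n} (h12 : p.1 < p.2)
    (hinv : x (Equiv.swap a b p.2) < x (Equiv.swap a b p.1)) :
    (swF a b p = (a, b)) ∨
      ((swF a b p).1 < (swF a b p).2 ∧ x (swF a b p).2 < x (swF a b p).1) := by
  obtain ⟨p₁, p₂⟩ := p
  simp only at h12 hinv
  rcases eq_or_ne a p₁ with rfl | h1a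
  · rcases eq_or_ne b p₂ with rfl | h2b
    · left
      have e : swF a b (a, b) = (a, b) := by
        simp only [swF, Equiv.swap_apply_left, Equiv.swap_apply_right]
        rw [if_neg (by exact fun h => absurd hab h.asymm)]
      exact e
    · have h2a : p₂ ≠ a := (h12.ne).symm
      rw [Equiv.swap_apply_left, Equiv.swap_apply_of_ne_of_ne h2a (Ne.symm h2b)] at hinv
      right
      rcases lt_or_gt_of_ne h2b with hgt | hlt
    -- hgt : b < p₂, hlt : p₂ < b  (lt_or_gt_of_ne h2b : b < p₂ ∨ b > p₂)
      · have e : swF a b (a, p₂) = (b, p₂) := by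
          simp only [swF, Equiv.swap_apply_left,
            Equiv.swap_apply_of_ne_of_ne h2a (Ne.symm h2b)]
          rw [if_pos hgt]
        rw [e]
        exact ⟨hgt, hinv⟩
      · have e : swF a b (a, p₂) = (a, p₂) := by
          simp only [swF, Equiv.swap_apply_left,
            Equiv.swap_apply_of_ne_of_ne h2a (Ne.symm h2b)]
          rw [if_neg (fun h => absurd hlt h.asymm)]
        rw [e]
        refine ⟨h12, ?_⟩
        have hm := hmid p₂ h12 hlt
        have hne : x p₂ ≠ x a := x.injective.ne h2a
        rcases lt_or_gt_of_ne hne with h' | h'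
        · exact h'
        · exact absurd ⟨h', hinv⟩ hm
  · rcases eq_or_ne b p₁ with rfl | h1b
    · -- p₁ = b, p₂ > b
      have h2a : p₂ ≠ a := ne_of_gt (hab.trans h12)
      have h2b : p₂ ≠ b := (h12.ne).symm
      rw [Equiv.swap_apply_right, Equiv.swap_apply_of_ne_of_ne h2a h2b] at hinv
      have e : swF a b (b, p₂) = (a, p₂) := by
        simp only [swF, Equiv.swap_apply_right, Equiv.swap_apply_of_ne_of_ne h2a h2b]
        rw [if_pos (hab.trans h12)]
      rw [e]
      exact Or.inr ⟨hab.trans h12, hinv⟩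
    · rcases eq_or_ne a p₂ with rfl | h2a
      · -- p₂ = a, p₁ < a
        have h1b' : p₁ ≠ b := ne_of_lt (h12.trans hab)
        rw [Equiv.swap_apply_left, Equiv.swap_apply_of_ne_of_ne (Ne.symm h1a) h1b'] at hinv
        have e : swF a b (p₁, a) = (p₁, b) := by
          simp only [swF, Equiv.swap_apply_left,
            Equiv.swap_apply_of_ne_of_ne (Ne.symm h1a) h1b']
          rw [if_pos (h12.trans hab)]
        rw [e]
        exact Or.inr ⟨h12.trans hab, hinv⟩
      · rcases eq_or_ne b p₂ with rfl | h2b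
        · -- p₂ = b, p₁ ≠ a
          have h1b' : p₁ ≠ b := h12.ne
          rw [Equiv.swap_apply_right,
            Equiv.swap_apply_of_ne_of_ne (Ne.symm h1a) h1b'] at hinv
          right
          rcases lt_or_gt_of_ne h1a with hgt | hlt
          -- hgt : a < p₁, hlt : p₁ < a
          · have e : swF a b (p₁, b) = (p₁, b) := by
              simp only [swF, Equiv.swap_apply_right,
                Equiv.swap_apply_of_ne_of_ne (Ne.symm h1a) h1b']
              rw [if_neg (fun h => absurd hgt h.asymm)]
            rw [e]
            refine ⟨h12, ?_⟩
            have hm := hmid p₁ hgt h12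
            have hne : x p₁ ≠ x b := x.injective.ne h1b'
            rcases lt_or_gt_of_ne hne with h' | h'
            · exact absurd ⟨hinv, h'⟩ hm
            · exact h'
          · have e : swF a b (p₁, b) = (p₁, a) := by
              simp only [swF, Equiv.swap_apply_right,
                Equiv.swap_apply_of_ne_of_ne (Ne.symm h1a) h1b']
              rw [if_pos hlt]
            rw [e]
            exact ⟨hlt, hinv⟩
        · -- generic pair
          rw [Equiv.swap_apply_of_ne_of_ne (Ne.symm h1a) (Ne.symm h1b),
            Equiv.swap_apply_of_ne_of_ne (Ne.symm h2a) (Ne.symm h2b)] at hinv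
          have e : swF a b (p₁, p₂) = (p₁, p₂) := by
            simp only [swF, Equiv.swap_apply_of_ne_of_ne (Ne.symm h1a) (Ne.symm h1b),
              Equiv.swap_apply_of_ne_of_ne (Ne.symm h2a) (Ne.symm h2b)]
            rw [if_pos h12]
          rw [e]
          exact Or.inr ⟨h12, hinv⟩

private lemma swF_mem₂ {x : Equiv.Perm (Fin n)} {a b : Fin n} (hab : a < b) (hx : x a < x b)
    {p : Fin n × Fin n} (h12 : p.1 < p.2) (hinv : x p.2 < x p.1) :
    (swF a b p).1 < (swF a b p).2 ∧
      x (Equiv.swap a b (swF a b p).2) < x (Equiv.swap a b (swF a b p).1) := by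
  obtain ⟨p₁, p₂⟩ := p
  simp only at h12 hinv
  rcases eq_or_ne a p₁ with rfl | h1a
  · rcases eq_or_ne b p₂ with rfl | h2b
    · exact absurd hinv hx.asymm
    · have h2a : p₂ ≠ a := (h12.ne).symm
      rcases lt_or_gt_of_ne h2b with hgt | hlt
      · have e : swF a b (a, p₂) = (b, p₂) := by
          simp only [swF, Equiv.swap_apply_left,
            Equiv.swap_apply_of_ne_of_ne h2a (Ne.symm h2b)]
          rw [if_pos hgt]
        rw [e]
        refine ⟨hgt, ?_⟩
        rw [Equiv.swap_apply_right, Equiv.swap_apply_of_ne_of_ne h2a (Ne.symm h2b)]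
        exact hinv
      · have e : swF a b (a, p₂) = (a, p₂) := by
          simp only [swF, Equiv.swap_apply_left,
            Equiv.swap_apply_of_ne_of_ne h2a (Ne.symm h2b)]
          rw [if_neg (fun h => absurd hlt h.asymm)]
        rw [e]
        refine ⟨h12, ?_⟩
        rw [Equiv.swap_apply_left, Equiv.swap_apply_of_ne_of_ne h2a (Ne.symm h2b)]
        exact hinv.trans hx
  · rcases eq_or_ne b p₁ with rfl | h1b
    · have h2a : p₂ ≠ a := ne_of_gt (hab.trans h12)
      have h2b : p₂ ≠ b := (h12.ne).symm
      have e : swF a b (b, p₂) = (a, p₂) := by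
        simp only [swF, Equiv.swap_apply_right, Equiv.swap_apply_of_ne_of_ne h2a h2b]
        rw [if_pos (hab.trans h12)]
      rw [e]
      refine ⟨hab.trans h12, ?_⟩
      rw [Equiv.swap_apply_left, Equiv.swap_apply_of_ne_of_ne h2a h2b]
      exact hinv
    · rcases eq_or_ne a p₂ with rfl | h2a
      · have h1b' : p₁ ≠ b := ne_of_lt (h12.trans hab)
        have e : swF a b (p₁, a) = (p₁, b) := by
          simp only [swF, Equiv.swap_apply_left,
            Equiv.swap_apply_of_ne_of_ne (Ne.symm h1a) h1b']
          rw [if_pos (h12.trans hab)]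
        rw [e]
        refine ⟨h12.trans hab, ?_⟩
        rw [Equiv.swap_apply_right, Equiv.swap_apply_of_ne_of_ne (Ne.symm h1a) h1b']
        exact hinv
      · rcases eq_or_ne b p₂ with rfl | h2b
        · have h1b' : p₁ ≠ b := h12.ne
          rcases lt_or_gt_of_ne h1a with hgt | hlt
          · have e : swF a b (p₁, b) = (p₁, b) := by
              simp only [swF, Equiv.swap_apply_right,
                Equiv.swap_apply_of_ne_of_ne (Ne.symm h1a) h1b']
              rw [if_neg (fun h => absurd hgt h.asymm)]
            rw [e]
            refine ⟨h12, ?_⟩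
            rw [Equiv.swap_apply_right, Equiv.swap_apply_of_ne_of_ne (Ne.symm h1a) h1b']
            exact hx.trans hinv
          · have e : swF a b (p₁, b) = (p₁, a) := by
              simp only [swF, Equiv.swap_apply_right,
                Equiv.swap_apply_of_ne_of_ne (Ne.symm h1a) h1b']
              rw [if_pos hlt]
            rw [e]
            refine ⟨hlt, ?_⟩
            rw [Equiv.swap_apply_left, Equiv.swap_apply_of_ne_of_ne (Ne.symm h1a) h1b']
            exact hinv
        · have e : swF a b (p₁, p₂) = (p₁, p₂) := by
            simp only [swF, Equiv.swap_apply_of_ne_of_ne (Ne.symm h1a) (Ne.symm h1b),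
              Equiv.swap_apply_of_ne_of_ne (Ne.symm h2a) (Ne.symm h2b)]
            rw [if_pos h12]
          rw [e]
          refine ⟨h12, ?_⟩
          rw [Equiv.swap_apply_of_ne_of_ne (Ne.symm h1a) (Ne.symm h1b),
            Equiv.swap_apply_of_ne_of_ne (Ne.symm h2a) (Ne.symm h2b)]
          exact hinv

private lemma invLen_mul_swap {x : Equiv.Perm (Fin n)} {a b : Fin n} (hab : a < b)
    (hx : x a < x b)
    (hmid : ∀ c : Fin n, a < c → c < b → ¬(x a < x c ∧ x c < x b)) :
    invLen (x * Equiv.swap a b) = invLen x + 1 := by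
  classical
  have habne : (a, b) ∉ (Finset.univ.filter
      (fun p : Fin n × Fin n => p.1 < p.2 ∧ x p.2 < x p.1)) := by
    simp only [Finset.mem_filter, Finset.mem_univ, true_and, not_and]
    exact fun _ => hx.asymm
  have key : invLen (x * Equiv.swap a b) = (insert (a, b) (Finset.univ.filter
      (fun p : Fin n × Fin n => p.1 < p.2 ∧ x p.2 < x p.1))).card := by
    unfold invLen
    apply Finset.card_nbij' (swF a b) (swF a b)
    · intro p hp
      rw [Finset.mem_coe, Finset.mem_filter] at hp
      simp only [Equiv.Perm.mul_apply] at hp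
      rw [Finset.mem_coe, Finset.mem_insert]
      rcases swF_mem₁ hab hx hmid hp.2.1 hp.2.2 with h | h
      · exact Or.inl h
      · exact Or.inr (Finset.mem_filter.mpr ⟨Finset.mem_univ _, h⟩)
    · intro p hp
      rw [Finset.mem_coe, Finset.mem_insert, Finset.mem_filter] at hp
      rw [Finset.mem_coe, Finset.mem_filter]
      refine ⟨Finset.mem_univ _, ?_⟩
      simp only [Equiv.Perm.mul_apply]
      rcases hp with rfl | hp
      · have e : swF a b (a, b) = (a, b) := by
          simp only [swF, Equiv.swap_apply_left, Equiv.swap_apply_right]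
          rw [if_neg (fun h => absurd hab h.asymm)]
        rw [e]
        exact ⟨hab, by rw [Equiv.swap_apply_left, Equiv.swap_apply_right]; exact hx⟩
      · exact swF_mem₂ hab hx hp.2.1 hp.2.2
    · intro p hp
      rw [Finset.mem_coe, Finset.mem_filter] at hp
      exact swF_invol a b p hp.2.1
    · intro p hp
      rw [Finset.mem_coe, Finset.mem_insert, Finset.mem_filter] at hp
      rcases hp with rfl | hp
      · exact swF_invol a b (a, b) hab
      · exact swF_invol a b p hp.2.1
  rw [key, Finset.card_insert_of_notMem habne]
  rfl

end Aux

private lemma bruhatLE_trans {u v w : Equiv.Perm (Fin n)} (h1 : BruhatLE u v)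
    (h2 : BruhatLE v w) : BruhatLE u w :=
  Relation.ReflTransGen.trans h1 h2

private lemma bruhatLE_mul_swap :
    ∀ (d : ℕ) {n : ℕ} (x : Equiv.Perm (Fin n)) (a b : Fin n),
      (b : ℕ) - (a : ℕ) ≤ d → a < b → x a < x b → BruhatLE x (x * Equiv.swap a b) := by
  intro d
  induction d with
  | zero =>
    intro n x a b hd hab _
    have : (a : ℕ) < b := hab
    omega
  | succ d ih =>
    intro n x a b hd hab hx
    by_cases hex : ∃ c : Fin n, (a < c ∧ c < b) ∧ x a < x c ∧ x c < x b
    · obtain ⟨c, ⟨hac, hcb⟩, h1, h2⟩ := hex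
      have hac' : (a : ℕ) < c := hac
      have hcb' : (c : ℕ) < b := hcb
      have hab' : (a : ℕ) < b := hab
      have hba : b ≠ a := hab.ne'
      have hbc : b ≠ c := hcb.ne'
      have e1 : BruhatLE x (x * Equiv.swap a c) := ih x a c (by omega) hac h1
      have e2 : BruhatLE (x * Equiv.swap a c) (x * Equiv.swap a c * Equiv.swap c b) := by
        apply ih _ c b (by omega) hcb
        simp only [Equiv.Perm.mul_apply, Equiv.swap_apply_right,
          Equiv.swap_apply_of_ne_of_ne hba hbc]
        exact hx
      have e3 : BruhatLE (x * Equiv.swap a c * Equiv.swap c b)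
          (x * Equiv.swap a c * Equiv.swap c b * Equiv.swap a c) := by
        apply ih _ a c (by omega) hac
        simp only [Equiv.Perm.mul_apply]
        rw [Equiv.swap_apply_of_ne_of_ne hac.ne hab.ne]
        simp only [Equiv.swap_apply_left]
        rw [Equiv.swap_apply_of_ne_of_ne hba hbc]
        exact h2
      have e0 : Equiv.swap a b = Equiv.swap a c * Equiv.swap c b * (Equiv.swap a c)⁻¹ := by
        have h := Equiv.swap_apply_apply (Equiv.swap a c) c b
        rwa [Equiv.swap_apply_right, Equiv.swap_apply_of_ne_of_ne hba hbc] at h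
      have e4 : x * Equiv.swap a c * Equiv.swap c b * Equiv.swap a c
          = x * Equiv.swap a b := by
        rw [e0, Equiv.swap_inv]
        group
      rw [← e4]
      exact bruhatLE_trans (bruhatLE_trans e1 e2) e3
    · apply Relation.ReflTransGen.single
      refine ⟨⟨Equiv.swap a b, ⟨a, b, hab.ne, rfl⟩, ?_⟩, ?_⟩
      · rw [mul_assoc, Equiv.swap_mul_self, mul_one]
      · exact (invLen_mul_swap hab hx
          (fun c hc1 hc2 hcontra => hex ⟨c, ⟨hc1, hc2⟩, hcontra⟩)).symm

private lemma invLen_lt_of_bruhatLE {u v : Equiv.Perm (Fin n)} (h : BruhatLE u v) :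
    u = v ∨ invLen u < invLen v := by
  induction h with
  | refl => exact Or.inl rfl
  | tail _ hstep ih =>
    right
    have h2 := hstep.2
    rcases ih with rfl | hlt <;> omega

private lemma main_key {n : ℕ} (w : Equiv.Perm (Fin n)) (I J : Fin n) (hIJ : I ≠ J)
    (hdec : ∀ p q : Fin n, p ≠ I → p ≠ J → q ≠ I → q ≠ J → p < q → w q < w p) :
    ∀ (k : ℕ) (v : Equiv.Perm (Fin n)), n * n - invLen v ≤ k →
      v I = w I → v J = w J → BruhatLE v w := by
  classical
  have hrange : ∀ u : Equiv.Perm (Fin n),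
      Set.range (fun p : {p : Fin n // p ≠ I ∧ p ≠ J} => u p.1)
        = {t : Fin n | t ≠ u I ∧ t ≠ u J} := by
    intro u
    ext t
    constructor
    · rintro ⟨⟨p, hp1, hp2⟩, rfl⟩
      exact ⟨u.injective.ne hp1, u.injective.ne hp2⟩
    · rintro ⟨h0, h1⟩
      refine ⟨⟨u.symm t, fun h => h0 ?_, fun h => h1 ?_⟩, u.apply_symm_apply t⟩
      · rw [← h, u.apply_symm_apply]
      · rw [← h, u.apply_symm_apply]
  have dich : ∀ v : Equiv.Perm (Fin n), v I = w I → v J = w J →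
      v = w ∨ ∃ a b : Fin n, a < b ∧ a ≠ I ∧ a ≠ J ∧ b ≠ I ∧ b ≠ J ∧ v a < v b := by
    intro v hvI hvJ
    by_cases hvw : v = w
    · exact Or.inl hvw
    · right
      by_contra hno
      push_neg at hno
      apply hvw
      have hfa : StrictAnti (fun p : {p : Fin n // p ≠ I ∧ p ≠ J} => v p.1) := by
        rintro ⟨p, hp1, hp2⟩ ⟨q, hq1, hq2⟩ hpq
        have hpq' : p < q := hpq
        have hne : v q ≠ v p := v.injective.ne hpq'.ne'
        exact lt_of_le_of_ne (hno p q hpq' hp1 hp2 hq1 hq2) hne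
      have hga : StrictAnti (fun p : {p : Fin n // p ≠ I ∧ p ≠ J} => w p.1) := by
        rintro ⟨p, hp1, hp2⟩ ⟨q, hq1, hq2⟩ hpq
        exact hdec p q hp1 hp2 hq1 hq2 hpq
      have hr : Set.range (fun p : {p : Fin n // p ≠ I ∧ p ≠ J} => v p.1)
          = Set.range (fun p : {p : Fin n // p ≠ I ∧ p ≠ J} => w p.1) := by
        rw [hrange v, hrange w, hvI, hvJ]
      have hfg := Set.range_injOn_strictAnti hfa hga hr
      apply Equiv.ext
      intro p
      by_cases hp1 : p = I
      · rw [hp1, hvI]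
      · by_cases hp2 : p = J
        · rw [hp2, hvJ]
        · exact congrFun hfg ⟨p, hp1, hp2⟩
  have step : ∀ v : Equiv.Perm (Fin n), v ≠ w → v I = w I → v J = w J →
      ∃ v' : Equiv.Perm (Fin n), BruhatLE v v' ∧ invLen v < invLen v' ∧
        invLen v' ≤ n * n ∧ v' I = w I ∧ v' J = w J := by
    intro v hvw hvI hvJ
    rcases dich v hvI hvJ with rfl | ⟨a, b, hab, haI, haJ, hbI, hbJ, hv⟩
    · exact absurd rfl hvw
    · refine ⟨v * Equiv.swap a b, ?_, ?_, ?_, ?_, ?_⟩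
      · exact bruhatLE_mul_swap ((b : ℕ) - (a : ℕ)) v a b le_rfl hab hv
      · rcases invLen_lt_of_bruhatLE
          (bruhatLE_mul_swap ((b : ℕ) - (a : ℕ)) v a b le_rfl hab hv) with heq | h
        · exact absurd (Equiv.mul_swap_eq_iff.mp heq.symm) hab.ne
        · exact h
      · unfold invLen
        calc (Finset.univ.filter _).card ≤ Finset.univ.card := Finset.card_filter_le _ _
          _ = n * n := by simp
      · rw [Equiv.Perm.mul_apply, Equiv.swap_apply_of_ne_of_ne haI.symm hbI.symm, hvI]
      · rw [Equiv.Perm.mul_apply, Equiv.swap_apply_of_ne_of_ne haJ.symm hbJ.symm, hvJ]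
  intro k
  induction k with
  | zero =>
    intro v hk hvI hvJ
    by_cases hvw : v = w
    · exact hvw ▸ Relation.ReflTransGen.refl
    · obtain ⟨v', _, hlt, hbd, _, _⟩ := step v hvw hvI hvJ
      omega
  | succ k ih =>
    intro v hk hvI hvJ
    by_cases hvw : v = w
    · exact hvw ▸ Relation.ReflTransGen.refl
    · obtain ⟨v', hle, hlt, hbd, hvI', hvJ'⟩ := step v hvw hvI hvJ
      exact bruhatLE_trans hle (ih v' (by omega) hvI' hvJ')





/-- `w` (the permutation with `w(i)=1`, `w(j)=n` and remaining values
`n−1,…,2` in decreasing order) is the largest permutation in the Bruhat order with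
`w(i) = 1` and `w(j) = n`: every `v` with `v(i) = 1`, `v(j) = n` satisfies `v ≤ w`. -/
theorem stmt7 (n : ℕ) (hn : 2 ≤ n) (i j : ℕ) (hi1 : 1 ≤ i) (hin : i ≤ n)
    (hj1 : 1 ≤ j) (hjn : j ≤ n) (hij : i ≠ j) (w : Equiv.Perm (Fin n))
    (hwi : w ⟨i - 1, by omega⟩ = ⟨0, by omega⟩)
    (hwj : w ⟨j - 1, by omega⟩ = ⟨n - 1, by omega⟩)
    (hdec : ∀ p q : Fin n, p ≠ ⟨i - 1, by omega⟩ → p ≠ ⟨j - 1, by omega⟩ →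
      q ≠ ⟨i - 1, by omega⟩ → q ≠ ⟨j - 1, by omega⟩ → p < q → w q < w p) :
    ∀ v : Equiv.Perm (Fin n),
      v ⟨i - 1, by omega⟩ = ⟨0, by omega⟩ → v ⟨j - 1, by omega⟩ = ⟨n - 1, by omega⟩ →
        BruhatLE v w := by
  intro v hvi hvj
  have hIJ : (⟨i - 1, by omega⟩ : Fin n) ≠ ⟨j - 1, by omega⟩ := by
    simp only [ne_eq, Fin.mk.injEq]
    omega
  refine main_key w ⟨i - 1, by omega⟩ ⟨j - 1, by omega⟩ hIJ hdec (n * n) v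
    (Nat.sub_le _ _) ?_ ?_
  · exact hvi.trans hwi.symm
  · exact hvj.trans hwj.symm
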